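/- Let k be a field, and let B₁, B₂, B₃ be k-vector spaces with an alternating multiplication B₁×B₁ → B₂ and a bilinear pairing B₁×B₂ → B₃. Suppose there are bases of B₁, B₂, B₃ realizing the H(p',q') multiplication: E'_{p'+1}E'_j = F'_j for 1 ≤ j ≤ p' and E'_{p'+1}F'_{p'+i} = G'_i for 1 ≤ i ≤ q', all other basis products zero. If u ∈ B₁ and f ∈ B₂ satisfy uf ≠ 0, then the coefficient of E'_{p'+1} in u is nonzero, and consequently the rank of the map B₁ → B₂, v ↦ uv, is at least p'. -/

import Mathlib

theorem statement16 {k B1 B2 B3 : Type} [Field k]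
    [AddCommGroup B1] [Module k B1] [AddCommGroup B2] [Module k B2]
    [AddCommGroup B3] [Module k B3]
    {a b c : ℕ}
    (E : Module.Basis (Fin a) k B1) (F : Module.Basis (Fin b) k B2) (G : Module.Basis (Fin c) k B3)
    (μ1 : B1 →ₗ[k] B1 →ₗ[k] B2) (μ2 : B1 →ₗ[k] B2 →ₗ[k] B3)
    (halt : ∀ x, μ1 x x = 0)
    (p' q' : ℕ) (hp' : p' < a)
    (h11 : ∀ i j, μ1 (E i) (E j) =
      (if i.val = p' ∧ j.val < p' then (if h : j.val < b then F ⟨j.val, h⟩ else 0)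
       else if j.val = p' ∧ i.val < p' then -(if h : i.val < b then F ⟨i.val, h⟩ else 0)
       else 0))
    (h12 : ∀ i j, μ2 (E i) (F j) =
      (if i.val = p' ∧ p' ≤ j.val ∧ j.val < p' + q' then
        (if h : j.val - p' < c then G ⟨j.val - p', h⟩ else 0)
       else 0))
    (u : B1) (f : B2) (hne : μ2 u f ≠ 0) :
    E.repr u ⟨p', hp'⟩ ≠ 0 ∧ p' ≤ Module.finrank k (LinearMap.range (μ1 u)) := by
  set i0 : Fin a := ⟨p', hp'⟩ with hi0
  set cc : k := E.repr u i0 with hcc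
  -- step 1
  have hzero : ∀ i : Fin a, i.val ≠ p' → μ2 (E i) = 0 := by
    intro i hi
    refine F.ext fun j => ?_
    simp [h12, hi]
  -- step 2
  have hsum : μ2 u f = cc • μ2 (E i0) f := by
    conv_lhs => rw [← E.sum_repr u]
    rw [map_sum, LinearMap.sum_apply]
    rw [Finset.sum_eq_single i0]
    · simp [hcc]
    · intro i _ hi
      have : i.val ≠ p' := by
        intro h; exact hi (Fin.ext h)
      simp [hzero i this]
    · simp
  have hc : cc ≠ 0 := by
    intro h
    rw [hsum, h, zero_smul] at hne
    exact hne rfl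
  refine ⟨hc, ?_⟩
  -- step 4 : p' < b
  have hE0 : μ2 (E i0) f ≠ 0 := by
    intro h; rw [hsum, h, smul_zero] at hne; exact hne rfl
  have hpb : p' < b := by
    by_contra hb
    push_neg at hb
    apply hE0
    have : μ2 (E i0) = 0 := by
      refine F.ext fun j => ?_
      have : ¬ (p' ≤ j.val) := by omega
      simp [h12, this]
    rw [this]; rfl
  -- step 5
  have hmu1 : ∀ j : Fin a, ∀ hj : j.val < p',
      μ1 u (E j) = cc • F ⟨j.val, hj.trans hpb⟩ := by
    intro j hj
    conv_lhs => rw [← E.sum_repr u]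
    rw [map_sum, LinearMap.sum_apply]
    rw [Finset.sum_eq_single i0]
    · rw [map_smul, LinearMap.smul_apply, h11]
      have h1 : (i0 : Fin a).val = p' := rfl
      simp only [h1, hj, and_self, if_true, true_and]
      rw [dif_pos (hj.trans hpb)]
    · intro i _ hi
      have hip : i.val ≠ p' := fun h => hi (Fin.ext h)
      have hjp : j.val ≠ p' := by omega
      rw [map_smul, LinearMap.smul_apply, h11]
      simp [hip, hjp]
    · simp
  -- step 6: independent family in range
  haveI : Module.Finite k B2 := Module.Finite.of_basis F
  set w : Fin p' → B2 := fun t => F ⟨t.val, t.2.trans hpb⟩ with hw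
  have hmem : ∀ t, w t ∈ LinearMap.range (μ1 u) := by
    intro t
    refine ⟨cc⁻¹ • E ⟨t.val, t.2.trans hp'⟩, ?_⟩
    rw [map_smul, hmu1 ⟨t.val, t.2.trans hp'⟩ t.2, smul_smul, inv_mul_cancel₀ hc, one_smul]
  have hind : LinearIndependent k w := by
    have : w = F ∘ (fun t : Fin p' => (⟨t.val, t.2.trans hpb⟩ : Fin b)) := rfl
    rw [this]
    exact F.linearIndependent.comp _ (fun s t h => Fin.ext (by
      have := congrArg Fin.val h; simpa using this))
  set w' : Fin p' → LinearMap.range (μ1 u) := fun t => ⟨w t, hmem t⟩ with hw'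
  have hind' : LinearIndependent k w' := by
    apply LinearIndependent.of_comp (LinearMap.range (μ1 u)).subtype
    exact hind
  simpa using hind'.fintype_card_le_finrank
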